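/- Let π be a probability mass function on ℕ with probability generating function f(s) = Σ_{k≥0} π_k s^k and mean μ = Σ_{k≥0} k·π_k satisfying 1 < μ < ∞, and set h(s) = (1 − f(s))/(1 − s). Let λ > 0, β = λ(μ − 1), and let F : [0,∞) × [0,1) → [0,1) satisfy F_0(s) = s and the backward Kolmogorov equation ∂_t F_t(s) = λ·(f(F_t(s)) − F_t(s)) for all t ≥ 0 and s ∈ [0,1). Define H_t(s) = (1 − F_t(s))/(1 − s). Then for all t ≥ 0 and s ∈ [0,1), e^{βt} − H_t(s) = λ·∫₀^t (μ − h(F_{t−u}(s)))·H_{t−u}(s)·e^{βu} du. -/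

import Mathlib

open Set intervalIntegral

theorem stmt_18 (p : ℕ → ℝ) (hp0 : ∀ k, 0 ≤ p k) (hp1 : ∑' k, p k = 1)
    (f : ℝ → ℝ) (hf : ∀ s, f s = ∑' k : ℕ, p k * s ^ k)
    (μ : ℝ) (hμdef : μ = ∑' k : ℕ, (k : ℝ) * p k) (hμ : 1 < μ)
    (h : ℝ → ℝ) (hh : ∀ s, h s = (1 - f s) / (1 - s))
    (lam β : ℝ) (hlam : 0 < lam) (hβ : β = lam * (μ - 1))
    (F : ℝ → ℝ → ℝ)
    (hF0 : ∀ s ∈ Ico (0:ℝ) 1, F 0 s = s)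
    (hFrange : ∀ t ≥ (0:ℝ), ∀ s ∈ Ico (0:ℝ) 1, F t s ∈ Ico (0:ℝ) 1)
    (hFderiv : ∀ t ≥ (0:ℝ), ∀ s ∈ Ico (0:ℝ) 1,
      HasDerivAt (fun τ => F τ s) (lam * (f (F t s) - F t s)) t)
    (H : ℝ → ℝ → ℝ) (hH : ∀ t s, H t s = (1 - F t s) / (1 - s)) :
    ∀ t ≥ (0:ℝ), ∀ s ∈ Ico (0:ℝ) 1,
      Real.exp (β * t) - H t s =
        lam * ∫ u in (0:ℝ)..t, (μ - h (F (t - u) s)) * H (t - u) s * Real.exp (β * u) := by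
  -- summability of p
  have hsum : Summable p := by
    by_contra hns
    rw [tsum_eq_zero_of_not_summable hns] at hp1
    norm_num at hp1
  -- continuity of f on [-1,1]
  have hfc : ContinuousOn f (Icc (-1:ℝ) 1) := by
    have h1 : ContinuousOn (fun x : ℝ => ∑' k : ℕ, p k * x ^ k) (Icc (-1:ℝ) 1) := by
      apply continuousOn_tsum (u := p)
        (fun i => (continuous_const.mul (continuous_pow i)).continuousOn) hsum
      intro n x hx
      have hx1 : |x| ≤ 1 := abs_le.2 ⟨hx.1, hx.2⟩
      have : |p n * x ^ n| = p n * |x| ^ n := by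
        rw [abs_mul, abs_of_nonneg (hp0 n), abs_pow]
      rw [Real.norm_eq_abs]; show |p n * x ^ n| ≤ p n; rw [this]
      calc p n * |x| ^ n ≤ p n * 1 := by
              exact mul_le_mul_of_nonneg_left (pow_le_one₀ (abs_nonneg x) hx1) (hp0 n)
        _ = p n := mul_one _
    exact h1.congr fun x _ => hf x
  intro t ht s hs
  have hs1 : (1:ℝ) - s ≠ 0 := by
    have := hs.2; linarith
  set c : ℝ → ℝ := fun u => F (t - u) s with hc_def
  have hcrange : ∀ u ∈ Icc (0:ℝ) t, c u ∈ Ico (0:ℝ) 1 := by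
    intro u hu
    exact hFrange (t - u) (by linarith [hu.2]) s hs
  have hcderiv : ∀ u ∈ Icc (0:ℝ) t, HasDerivAt c (-(lam * (f (c u) - c u))) u := by
    intro u hu
    have h1 := hFderiv (t - u) (by linarith [hu.2]) s hs
    have h2 : HasDerivAt (fun u : ℝ => t - u) (-1) u := by
      simpa using (hasDerivAt_id u).const_sub t
    have := h1.comp u h2
    simpa [hc_def, mul_comm, Function.comp_def] using this
  -- the function G
  set G : ℝ → ℝ := fun u => (1 - c u) / (1 - s) * Real.exp (β * u) with hG_def
  have hGderiv : ∀ u ∈ Icc (0:ℝ) t,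
      HasDerivAt G (lam * ((μ - h (F (t - u) s)) * H (t - u) s * Real.exp (β * u))) u := by
    intro u hu
    have hA : HasDerivAt (fun u => (1 - c u) / (1 - s))
        ((lam * (f (c u) - c u)) / (1 - s)) u := by
      have := ((hcderiv u hu).const_sub 1).div_const (1 - s)
      simpa using this
    have hB : HasDerivAt (fun u => Real.exp (β * u)) (Real.exp (β * u) * β) u := by
      have h2 : HasDerivAt (fun u : ℝ => β * u) β u := by
        simpa using (hasDerivAt_id u).const_mul β
      simpa [Function.comp_def] using (Real.hasDerivAt_exp (β * u)).comp u h2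
    have hAB := hA.mul hB
    refine hAB.congr_deriv ?_
    have hcu := hcrange u hu
    have hc1 : (1:ℝ) - c u ≠ 0 := by have := hcu.2; linarith
    rw [hh, hH, hβ]
    simp only [hc_def]
    have hc1' : (1:ℝ) - F (t - u) s ≠ 0 := hc1
    field_simp
    ring
  have hcont : ContinuousOn
      (fun u => lam * ((μ - h (F (t - u) s)) * H (t - u) s * Real.exp (β * u)))
      (Icc (0:ℝ) t) := by
    have hcc : ContinuousOn c (Icc (0:ℝ) t) :=
      fun u hu => (hcderiv u hu).continuousAt.continuousWithinAt
    have hfcc : ContinuousOn (fun u => f (c u)) (Icc (0:ℝ) t) := by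
      apply hfc.comp hcc
      intro u hu
      have := hcrange u hu
      exact ⟨by linarith [this.1], le_of_lt this.2⟩
    have hdenom : ContinuousOn (fun u => 1 - c u) (Icc (0:ℝ) t) :=
      continuousOn_const.sub hcc
    have hhc : ContinuousOn (fun u => h (F (t - u) s)) (Icc (0:ℝ) t) := by
      have : ContinuousOn (fun u => (1 - f (c u)) / (1 - c u)) (Icc (0:ℝ) t) := by
        apply ContinuousOn.div (continuousOn_const.sub hfcc) hdenom
        intro u hu
        have := (hcrange u hu).2; linarith
      exact this.congr fun u hu => by rw [hh]
    have hHc : ContinuousOn (fun u => H (t - u) s) (Icc (0:ℝ) t) := by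
      have : ContinuousOn (fun u => (1 - c u) / (1 - s)) (Icc (0:ℝ) t) :=
        hdenom.div_const _
      exact this.congr fun u hu => by rw [hH]
    have hexp : ContinuousOn (fun u => Real.exp (β * u)) (Icc (0:ℝ) t) :=
      (Real.continuous_exp.comp (continuous_const.mul continuous_id)).continuousOn
    exact continuousOn_const.mul (((continuousOn_const.sub hhc).mul hHc).mul hexp)
  have huIcc : uIcc (0:ℝ) t = Icc (0:ℝ) t := uIcc_of_le ht
  have hint := intervalIntegral.integral_eq_sub_of_hasDerivAt
    (f := G)
    (fun u hu => hGderiv u (huIcc ▸ hu))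
    ((hcont.mono (by rw [huIcc])).intervalIntegrable)
  rw [intervalIntegral.integral_const_mul] at hint
  have hGt : G t = Real.exp (β * t) := by
    simp only [hG_def, hc_def, sub_self]
    rw [hF0 s hs, div_self hs1, one_mul]
  have hG0 : G 0 = H t s := by
    simp only [hG_def, hc_def, sub_zero, mul_zero, Real.exp_zero, mul_one]
    rw [hH]
  rw [hGt, hG0] at hint
  linarith [hint]
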